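/- Let n ≥ 1, λ > 0, and let K and L be real symmetric positive semidefinite n×n matrices with spectral decompositions K = ∑_i μ_i u_i u_iᵀ and L = ∑_j ν_j v_j v_jᵀ ((u_i), (v_j) orthonormal eigenbases). Then Tr(K(K+nλI)⁻¹K(K+nλI)⁻¹) + Tr(L(L+nλI)⁻¹L(L+nλI)⁻¹) − 2 Tr(K(K+nλI)⁻¹L(L+nλI)⁻¹) = ∑_{i=1}^n (μ_i/(μ_i+nλ))² + ∑_{j=1}^n (ν_j/(ν_j+nλ))² − 2 ∑_{i=1}^n ∑_{j=1}^n ( μ_i ν_j / ((μ_i+nλ)(ν_j+nλ)) ) ⟨u_i, v_j⟩², and this common value is nonnegative. -/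

import Mathlib

open Matrix
open scoped RealInnerProductSpace

namespace Stmt15

variable {n : ℕ}

lemma vmv_mul (a b c d : Fin n → ℝ) :
    vecMulVec a b * vecMulVec c d = (b ⬝ᵥ c) • vecMulVec a d := by
  ext i j
  simp only [Matrix.mul_apply, vecMulVec_apply, Matrix.smul_apply, dotProduct, smul_eq_mul,
    Finset.sum_mul]
  exact Finset.sum_congr rfl fun k _ => by ring

lemma trace_vmv (a b : Fin n → ℝ) : (vecMulVec a b).trace = a ⬝ᵥ b := by
  simp [Matrix.trace, Matrix.diag, vecMulVec_apply, dotProduct]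

lemma inner_eq_dot (x y : EuclideanSpace ℝ (Fin n)) :
    ⟪x, y⟫ = (fun a => x a) ⬝ᵥ (fun a => y a) := by
  simp [PiLp.inner_apply, RCLike.inner_apply, dotProduct]
  exact Finset.sum_congr rfl fun _ _ => mul_comm _ _

lemma ortho_dot {u : Fin n → EuclideanSpace ℝ (Fin n)} (hu : Orthonormal ℝ u) (i j : Fin n) :
    (fun a => u i a) ⬝ᵥ (fun a => u j a) = if i = j then 1 else 0 := by
  rw [← inner_eq_dot]
  exact orthonormal_iff_ite.mp hu i j

lemma resolution {w : Fin n → Fin n → ℝ}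
    (hw : ∀ i j, w i ⬝ᵥ w j = if i = j then 1 else 0) :
    ∑ i, vecMulVec (w i) (w i) = (1 : Matrix (Fin n) (Fin n) ℝ) := by
  have h1 : (Matrix.of w) * (Matrix.of w)ᵀ = 1 := by
    ext i j
    simpa [Matrix.mul_apply, dotProduct, Matrix.one_apply] using hw i j
  have h2 := mul_eq_one_comm.mp h1
  ext i j
  have := congrFun (congrFun h2 i) j
  simpa [Matrix.mul_apply, Matrix.sum_apply, vecMulVec_apply, mul_comm] using this

lemma collapse {w : Fin n → Fin n → ℝ}
    (hw : ∀ i j, w i ⬝ᵥ w j = if i = j then 1 else 0) (x y : Fin n → ℝ) :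
    (∑ i, x i • vecMulVec (w i) (w i)) * (∑ j, y j • vecMulVec (w j) (w j))
      = ∑ i, (x i * y i) • vecMulVec (w i) (w i) := by
  rw [Finset.sum_mul_sum]
  refine Finset.sum_congr rfl fun i _ => ?_
  rw [Finset.sum_eq_single i]
  · rw [smul_mul_assoc, mul_smul_comm, vmv_mul, hw, if_pos rfl, smul_smul, smul_smul, mul_one]
  · intro j _ hj
    rw [smul_mul_assoc, mul_smul_comm, vmv_mul, hw, if_neg (Ne.symm hj), zero_smul,
      smul_zero, smul_zero]
  · intro h; exact absurd (Finset.mem_univ i) h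

lemma inv_reg {w : Fin n → Fin n → ℝ}
    (hw : ∀ i j, w i ⬝ᵥ w j = if i = j then 1 else 0) (x : Fin n → ℝ) (c : ℝ)
    (hx : ∀ i, x i + c ≠ 0) :
    ((∑ i, x i • vecMulVec (w i) (w i)) + c • 1)⁻¹
      = ∑ i, (x i + c)⁻¹ • vecMulVec (w i) (w i) := by
  apply Matrix.inv_eq_right_inv
  rw [add_mul, collapse hw, smul_mul_assoc, one_mul, Finset.smul_sum, ← Finset.sum_add_distrib]
  rw [← resolution hw]
  refine Finset.sum_congr rfl fun i _ => ?_
  rw [smul_smul, ← add_smul]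
  rw [show x i * (x i + c)⁻¹ + c * (x i + c)⁻¹ = (x i + c) * (x i + c)⁻¹ by ring,
    mul_inv_cancel₀ (hx i), one_smul]

lemma KS_eq {w : Fin n → Fin n → ℝ}
    (hw : ∀ i j, w i ⬝ᵥ w j = if i = j then 1 else 0) (x : Fin n → ℝ) (c : ℝ)
    (hx : ∀ i, x i + c ≠ 0) :
    (∑ i, x i • vecMulVec (w i) (w i)) * ((∑ i, x i • vecMulVec (w i) (w i)) + c • 1)⁻¹
      = ∑ i, (x i / (x i + c)) • vecMulVec (w i) (w i) := by
  rw [inv_reg hw x c hx, collapse hw]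
  simp [div_eq_mul_inv]

lemma trace_pair (w z : Fin n → Fin n → ℝ) (x y : Fin n → ℝ) :
    ((∑ i, x i • vecMulVec (w i) (w i)) * (∑ j, y j • vecMulVec (z j) (z j))).trace
      = ∑ i, ∑ j, x i * y j * (w i ⬝ᵥ z j) ^ 2 := by
  rw [Finset.sum_mul_sum, Matrix.trace_sum]
  refine Finset.sum_congr rfl fun i _ => ?_
  rw [Matrix.trace_sum]
  refine Finset.sum_congr rfl fun j _ => ?_
  rw [smul_mul_assoc, mul_smul_comm, vmv_mul, Matrix.trace_smul, Matrix.trace_smul,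
    Matrix.trace_smul, trace_vmv]
  simp [smul_eq_mul]; ring

lemma trace_sq_nonneg (M : Matrix (Fin n) (Fin n) ℝ) (h : Mᵀ = M) : 0 ≤ (M * M).trace := by
  have key : (M * M).trace = ∑ i, ∑ j, (M i j) ^ 2 := by
    simp only [Matrix.trace, Matrix.diag, Matrix.mul_apply]
    refine Finset.sum_congr rfl fun i _ => Finset.sum_congr rfl fun j _ => ?_
    have : M j i = M i j := by nth_rewrite 1 [← h]; rw [Matrix.transpose_apply]
    rw [this]; ring
  rw [key]
  positivity

lemma trace_mul_vmv_nonneg (K : Matrix (Fin n) (Fin n) ℝ) (hK : K.PosSemidef)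
    (x : Fin n → ℝ) : 0 ≤ (K * vecMulVec x x).trace := by
  have h := hK.dotProduct_mulVec_nonneg x
  have e : (K * vecMulVec x x).trace = star x ⬝ᵥ K *ᵥ x := by
    simp only [Matrix.trace, Matrix.diag, Matrix.mul_apply, dotProduct, Matrix.mulVec,
      vecMulVec_apply, star_trivial, Finset.mul_sum]
    refine Finset.sum_congr rfl fun i _ => Finset.sum_congr rfl fun j _ => by ring
  rw [e]; exact h

end Stmt15

open Stmt15

theorem stmt_15 {n : ℕ} (hn : 1 ≤ n) (lam : ℝ) (hlam : 0 < lam)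
    (K L : Matrix (Fin n) (Fin n) ℝ) (hK : K.PosSemidef) (hL : L.PosSemidef)
    (μ ν : Fin n → ℝ) (u v : Fin n → EuclideanSpace ℝ (Fin n))
    (hu : Orthonormal ℝ u) (hv : Orthonormal ℝ v)
    (hKdec : K = ∑ i, μ i • vecMulVec (fun a => u i a) (fun a => u i a))
    (hLdec : L = ∑ j, ν j • vecMulVec (fun a => v j a) (fun a => v j a)) :
    (K * (K + (n * lam) • 1)⁻¹ * K * (K + (n * lam) • 1)⁻¹).trace
        + (L * (L + (n * lam) • 1)⁻¹ * L * (L + (n * lam) • 1)⁻¹).trace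
        - 2 * (K * (K + (n * lam) • 1)⁻¹ * L * (L + (n * lam) • 1)⁻¹).trace =
      (∑ i, (μ i / (μ i + n * lam)) ^ 2) + (∑ j, (ν j / (ν j + n * lam)) ^ 2)
        - 2 * ∑ i, ∑ j, (μ i * ν j / ((μ i + n * lam) * (ν j + n * lam))) * ⟪u i, v j⟫ ^ 2 ∧
    0 ≤ (K * (K + (n * lam) • 1)⁻¹ * K * (K + (n * lam) • 1)⁻¹).trace
        + (L * (L + (n * lam) • 1)⁻¹ * L * (L + (n * lam) • 1)⁻¹).trace
        - 2 * (K * (K + (n * lam) • 1)⁻¹ * L * (L + (n * lam) • 1)⁻¹).trace := by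
  have hn1 : (1 : ℝ) ≤ (n : ℝ) := by exact_mod_cast hn
  have hc : 0 < (n : ℝ) * lam := by nlinarith
  set c : ℝ := (n : ℝ) * lam with hcdef
  have hwu : ∀ i j, (fun a => u i a) ⬝ᵥ (fun a => u j a) = if i = j then 1 else 0 :=
    ortho_dot hu
  have hwv : ∀ i j, (fun a => v i a) ⬝ᵥ (fun a => v j a) = if i = j then 1 else 0 :=
    ortho_dot hv
  have hμ : ∀ i, 0 ≤ μ i := by
    intro i
    have h1 : (K * vecMulVec (fun a => u i a) (fun a => u i a)).trace = μ i := by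
      rw [hKdec, Finset.sum_mul, Matrix.trace_sum, Finset.sum_eq_single i]
      · rw [smul_mul_assoc, vmv_mul, hwu, if_pos rfl, one_smul, Matrix.trace_smul, trace_vmv,
          hwu, if_pos rfl, smul_eq_mul, mul_one]
      · intro j _ hj
        rw [smul_mul_assoc, vmv_mul, hwu, if_neg hj, zero_smul, smul_zero, Matrix.trace_zero]
      · simp
    rw [← h1]; exact trace_mul_vmv_nonneg K hK _
  have hν : ∀ j, 0 ≤ ν j := by
    intro i
    have h1 : (L * vecMulVec (fun a => v i a) (fun a => v i a)).trace = ν i := by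
      rw [hLdec, Finset.sum_mul, Matrix.trace_sum, Finset.sum_eq_single i]
      · rw [smul_mul_assoc, vmv_mul, hwv, if_pos rfl, one_smul, Matrix.trace_smul, trace_vmv,
          hwv, if_pos rfl, smul_eq_mul, mul_one]
      · intro j _ hj
        rw [smul_mul_assoc, vmv_mul, hwv, if_neg hj, zero_smul, smul_zero, Matrix.trace_zero]
      · simp
    rw [← h1]; exact trace_mul_vmv_nonneg L hL _
  have hμc : ∀ i, μ i + c ≠ 0 := fun i => ne_of_gt (by have := hμ i; linarith)
  have hνc : ∀ j, ν j + c ≠ 0 := fun j => ne_of_gt (by have := hν j; linarith)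
  set A : Matrix (Fin n) (Fin n) ℝ :=
    ∑ i, (μ i / (μ i + c)) • vecMulVec (fun a => u i a) (fun a => u i a) with hAdef
  set B : Matrix (Fin n) (Fin n) ℝ :=
    ∑ j, (ν j / (ν j + c)) • vecMulVec (fun a => v j a) (fun a => v j a) with hBdef
  have hA : K * (K + c • 1)⁻¹ = A := by
    rw [hAdef, hKdec]; exact KS_eq hwu μ c hμc
  have hB : L * (L + c • 1)⁻¹ = B := by
    rw [hBdef, hLdec]; exact KS_eq hwv ν c hνc
  have e1 : K * (K + c • 1)⁻¹ * K * (K + c • 1)⁻¹ = A * A := by rw [mul_assoc, hA]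
  have e2 : L * (L + c • 1)⁻¹ * L * (L + c • 1)⁻¹ = B * B := by rw [mul_assoc, hB]
  have e3 : K * (K + c • 1)⁻¹ * L * (L + c • 1)⁻¹ = A * B := by rw [mul_assoc, hA, hB]
  have t1 : (A * A).trace = ∑ i, (μ i / (μ i + c)) ^ 2 := by
    rw [hAdef, trace_pair]
    refine Finset.sum_congr rfl fun i _ => ?_
    rw [Finset.sum_eq_single i]
    · rw [hwu, if_pos rfl]; ring
    · intro j _ hj; rw [hwu, if_neg (Ne.symm hj)]; ring
    · simp
  have t2 : (B * B).trace = ∑ j, (ν j / (ν j + c)) ^ 2 := by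
    rw [hBdef, trace_pair]
    refine Finset.sum_congr rfl fun i _ => ?_
    rw [Finset.sum_eq_single i]
    · rw [hwv, if_pos rfl]; ring
    · intro j _ hj; rw [hwv, if_neg (Ne.symm hj)]; ring
    · simp
  have t3 : (A * B).trace
      = ∑ i, ∑ j, (μ i * ν j / ((μ i + c) * (ν j + c))) * ⟪u i, v j⟫ ^ 2 := by
    rw [hAdef, hBdef, trace_pair]
    refine Finset.sum_congr rfl fun i _ => Finset.sum_congr rfl fun j _ => ?_
    rw [inner_eq_dot, div_mul_div_comm]
  have hAsym : Aᵀ = A := by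
    rw [hAdef]
    ext a b
    simp only [Matrix.transpose_apply, Matrix.sum_apply, Matrix.smul_apply, vecMulVec_apply,
      smul_eq_mul]
    exact Finset.sum_congr rfl fun i _ => by ring
  have hBsym : Bᵀ = B := by
    rw [hBdef]
    ext a b
    simp only [Matrix.transpose_apply, Matrix.sum_apply, Matrix.smul_apply, vecMulVec_apply,
      smul_eq_mul]
    exact Finset.sum_congr rfl fun i _ => by ring
  constructor
  · rw [e1, e2, e3, t1, t2, t3]
  · have expand : (A - B) * (A - B) = A * A - A * B - B * A + B * B := by noncomm_ring
    have hsym : (A - B)ᵀ = A - B := by rw [Matrix.transpose_sub, hAsym, hBsym]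
    have h0 := trace_sq_nonneg (A - B) hsym
    rw [expand] at h0
    simp only [Matrix.trace_add, Matrix.trace_sub] at h0
    have hba : (B * A).trace = (A * B).trace := Matrix.trace_mul_comm B A
    rw [e1, e2, e3]
    linarith
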